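/- Let D : Fin n → ℝ^d be a design, δ ∈ ℝ^d a tolerance vector with δ_i ≥ 0 for all i, and O ⊆ ℕ^d an order ideal that is numerically stable for (D, δ). Then O is weakly maximal (for every γ in the corner set of O, X^γ(D) numerically depends on O at (D, δ)) if and only if O is maximal (no order ideal that is numerically stable for (D, δ) properly contains O). -/

import Mathlib

set_option maxHeartbeats 1000000


open Finset

/-- An order ideal (hierarchical model) in ℕ^d: a finite set of exponent vectors
that is downward closed for the componentwise partial order. -/
def IsOrderIdeal {d : ℕ} (O : Finset (Fin d → ℕ)) : Prop :=
  ∀ α ∈ O, ∀ β : Fin d → ℕ, (∀ i, β i ≤ α i) → β ∈ O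

/-- γ belongs to the corner set of O: γ is a minimal element of the complement of O
with respect to the componentwise partial order. -/
def InCorner {d : ℕ} (O : Finset (Fin d → ℕ)) (γ : Fin d → ℕ) : Prop :=
  γ ∉ O ∧ ∀ β : Fin d → ℕ, β ∉ O → (∀ i, β i ≤ γ i) → β = γ

/-- Evaluation (design) vector of the monomial X^α at the design D. -/
def evalVec {n d : ℕ} (D : Fin n → Fin d → ℝ) (α : Fin d → ℕ) : Fin n → ℝ :=
  fun j => ∏ i, (D j i) ^ (α i)

/-- D' is a δ-perturbation of D. -/
def IsPerturbation {n d : ℕ} (δ : Fin d → ℝ) (D D' : Fin n → Fin d → ℝ) : Prop :=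
  ∀ j : Fin n, ∀ i : Fin d, |D' j i - D j i| < δ i

/-- O is numerically stable for the empirical design (D, δ): for every δ-perturbation D'
of D, the family of evaluation vectors (X^α(D'))_{α ∈ O} is linearly independent. -/
def NumStable {n d : ℕ} (D : Fin n → Fin d → ℝ) (δ : Fin d → ℝ)
    (O : Finset (Fin d → ℕ)) : Prop :=
  ∀ D' : Fin n → Fin d → ℝ, IsPerturbation δ D D' →
    LinearIndependent ℝ (fun α : {x // x ∈ O} => evalVec D' α.1)

/-- X^γ(D) numerically depends on O at (D, δ): there is a δ-perturbation D' of D such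
that X^γ(D') lies in the linear span of the evaluation vectors of O at D'. -/
def NumDepends {n d : ℕ} (D : Fin n → Fin d → ℝ) (δ : Fin d → ℝ)
    (O : Finset (Fin d → ℕ)) (γ : Fin d → ℕ) : Prop :=
  ∃ D' : Fin n → Fin d → ℝ, IsPerturbation δ D D' ∧
    evalVec D' γ ∈ Submodule.span ℝ ((fun α => evalVec D' α) '' (O : Set (Fin d → ℕ)))

theorem stmt_8 {n d : ℕ} (D : Fin n → Fin d → ℝ) (δ : Fin d → ℝ)
    (hδ : ∀ i, 0 ≤ δ i) (O : Finset (Fin d → ℕ)) (hO : IsOrderIdeal O)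
    (hstab : NumStable D δ O) :
    (∀ γ : Fin d → ℕ, InCorner O γ → NumDepends D δ O γ) ↔
    (¬ ∃ O' : Finset (Fin d → ℕ), IsOrderIdeal O' ∧ NumStable D δ O' ∧ O ⊂ O') := by
  classical
  constructor
  · -- weakly maximal → maximal
    rintro hdep ⟨O', hO', hstab', hss⟩
    -- pick a minimal-degree element of O' \ O
    have hne : (O' \ O).Nonempty := by
      rcases Finset.exists_of_ssubset hss with ⟨γ, hγ', hγ⟩
      exact ⟨γ, Finset.mem_sdiff.2 ⟨hγ', hγ⟩⟩
    obtain ⟨γ, hγmem, hγmin⟩ := Finset.exists_min_image (O' \ O) (fun γ => ∑ i, γ i) hne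
    rw [Finset.mem_sdiff] at hγmem
    obtain ⟨hγO', hγO⟩ := hγmem
    have hcorner : InCorner O γ := by
      refine ⟨hγO, fun β hβO hβle => ?_⟩
      have hβO' : β ∈ O' := hO' γ hγO' β hβle
      have hsum := hγmin β (Finset.mem_sdiff.2 ⟨hβO', hβO⟩)
      by_contra hne'
      have : ∃ i, β i < γ i := by
        by_contra hall
        push_neg at hall
        exact hne' (funext fun i => le_antisymm (hβle i) (hall i))
      obtain ⟨i, hi⟩ := this
      have : ∑ j, β j < ∑ j, γ j :=
        Finset.sum_lt_sum (fun j _ => hβle j) ⟨i, Finset.mem_univ i, hi⟩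
      omega
    obtain ⟨D', hD', hspan⟩ := hdep γ hcorner
    have hv := hstab' D' hD'
    set v : {x // x ∈ O'} → Fin n → ℝ := fun α => evalVec D' α.1 with hvdef
    have hx : (⟨γ, hγO'⟩ : {x // x ∈ O'}) ∉ {α : {x // x ∈ O'} | (α : Fin d → ℕ) ∈ O} := hγO
    have hnot := hv.notMem_span_image hx
    have himg : v '' {α : {x // x ∈ O'} | (α : Fin d → ℕ) ∈ O}
        = (fun α => evalVec D' α) '' (O : Set (Fin d → ℕ)) := by
      ext y
      constructor
      · rintro ⟨⟨a, ha'⟩, haO, rfl⟩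
        exact ⟨a, haO, rfl⟩
      · rintro ⟨a, haO, rfl⟩
        exact ⟨⟨a, hss.1 haO⟩, haO, rfl⟩
    rw [himg] at hnot
    exact hnot hspan
  · -- maximal → weakly maximal
    intro hmax γ hγ
    by_contra hdep
    apply hmax
    refine ⟨insert γ O, ?_, ?_, Finset.ssubset_insert hγ.1⟩
    · -- order ideal
      intro α hα β hβle
      rcases Finset.mem_insert.1 hα with rfl | hαO
      · by_cases hβ : β ∈ O
        · exact Finset.mem_insert_of_mem hβ
        · rw [hγ.2 β hβ hβle]; exact Finset.mem_insert_self _ _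
      · exact Finset.mem_insert_of_mem (hO α hαO β hβle)
    · -- numerically stable
      intro D' hD'
      have hind : LinearIndependent ℝ (fun α : {x // x ∈ O} => evalVec D' α.1) :=
        hstab D' hD'
      have hnot : evalVec D' γ ∉
          Submodule.span ℝ ((fun α => evalVec D' α) '' (O : Set (Fin d → ℕ))) :=
        fun hmem => hdep ⟨D', hD', hmem⟩
      have hγs : γ ∉ (O : Set (Fin d → ℕ)) := hγ.1
      have hli : LinearIndependent ℝ
          (fun α : ↥(insert γ (O : Set (Fin d → ℕ))) => evalVec D' α.1) :=
        (linearIndepOn_insert (f := fun α => evalVec D' α) hγs).2 ⟨hind, hnot⟩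
      exact (linearIndependent_equiv'
        (Equiv.subtypeEquivRight (fun x => by simp) :
          {x // x ∈ insert γ O} ≃ ↥(insert γ (O : Set (Fin d → ℕ))))
        (funext fun x => rfl)).2 hli
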